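/- Let μ be a lazy, symmetric probability measure on ℤ^d (μ(0) > 0, μ(x) = μ(−x)) whose support generates ℤ^d and which has exponentially decaying tails. Then there exist constants δ, c₂ > 0 such that the characteristic function μ̂(x) = Σ_n μ(n) cos(2π n·x) satisfies |μ̂(x)| ≤ 1 − c₂ ‖x‖²_{(ℝ/ℤ)^d} for all x ∈ (ℝ/ℤ)^d. -/

import Mathlib

set_option maxHeartbeats 2000000 in
/-- Let `μ` be a lazy, symmetric probability measure on `ℤ^d` whose support generates
`ℤ^d` and which has exponentially decaying tails.  Then there is `c₂ > 0` such that the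
characteristic function `μ̂(x) = Σ_n μ(n) cos(2π n·x)` satisfies
`|μ̂(x)| ≤ 1 − c₂‖x‖²_{(ℝ/ℤ)^d}` for all `x`. -/
theorem stmt_18 (d : ℕ) (hd : 1 ≤ d)
    (μ : (Fin d → ℤ) → ℝ)
    (hpos : ∀ n, 0 ≤ μ n) (hprob : HasSum μ 1)
    (hlazy : 0 < μ 0) (hsym : ∀ n, μ n = μ (-n))
    (hgen : AddSubgroup.closure (Function.support μ) = (⊤ : AddSubgroup (Fin d → ℤ)))
    (Ct ct : ℝ) (hCt : 0 < Ct) (hct : 0 < ct)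
    (htail : ∀ n, μ n ≤ Ct * Real.exp (-ct * Real.sqrt (∑ i, (n i : ℝ) ^ 2))) :
    ∃ c₂ : ℝ, 0 < c₂ ∧ ∀ x : Fin d → ℝ,
      |∑' n, μ n * Real.cos (2 * Real.pi * ∑ i, (n i : ℝ) * x i)| ≤
        1 - c₂ * ∑ i, ‖((x i : ℝ) : AddCircle (1 : ℝ))‖ ^ 2 := by
  classical
  set f : (Fin d → ℝ) → ℝ :=
    fun x => ∑' n, μ n * Real.cos (2 * Real.pi * ∑ i, (n i : ℝ) * x i) with hf
  have hsummable : ∀ x : Fin d → ℝ, Summable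
      (fun n : Fin d → ℤ => μ n * Real.cos (2 * Real.pi * ∑ i, (n i : ℝ) * x i)) := by
    intro x
    apply Summable.of_norm_bounded hprob.summable
    intro n
    rw [Real.norm_eq_abs, abs_mul, abs_of_nonneg (hpos n)]
    have h1 := Real.abs_cos_le_one (2 * Real.pi * ∑ i, (n i : ℝ) * x i)
    nlinarith [hpos n]
  have hB : ∀ x : Fin d → ℝ, HasSum
      (fun n : Fin d → ℤ => μ n * (1 - Real.cos (2 * Real.pi * ∑ i, (n i : ℝ) * x i)))
      (1 - f x) := by
    intro x
    have h2 := (hsummable x).hasSum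
    have h3 := hprob.sub h2
    simpa [mul_sub, mul_one] using h3
  have hnn : ∀ (x : Fin d → ℝ) (n : Fin d → ℤ),
      0 ≤ μ n * (1 - Real.cos (2 * Real.pi * ∑ i, (n i : ℝ) * x i)) := by
    intro x n
    have := Real.cos_le_one (2 * Real.pi * ∑ i, (n i : ℝ) * x i)
    nlinarith [hpos n]
  have hfle : ∀ x : Fin d → ℝ, 0 ≤ 1 - f x := by
    intro x
    exact hasSum_le (fun n => hnn x n) hasSum_zero (hB x)
  -- pointwise comparison with single-site term
  have hsingle : ∀ (x : Fin d → ℝ) (v : Fin d → ℤ),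
      μ v * (1 - Real.cos (2 * Real.pi * ∑ i, (v i : ℝ) * x i)) ≤ 1 - f x := by
    intro x v
    exact le_hasSum (hB x) v (fun n _ => hnn x n)
  -- ‖θ‖² ≤ (1 - cos 2πθ)/8 on the circle
  have hD : ∀ θ : ℝ, ‖((θ : ℝ) : AddCircle (1:ℝ))‖ ^ 2 ≤
      (1 - Real.cos (2 * Real.pi * θ)) / 8 := by
    intro θ
    have hnorm : ‖((θ : ℝ) : AddCircle (1:ℝ))‖ = |θ - round θ| := by
      rw [AddCircle.norm_eq]; norm_num
    set t := θ - round θ with ht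
    have ht2 : |t| ≤ 1 / 2 := abs_sub_round θ
    have hcos : Real.cos (2 * Real.pi * θ) = Real.cos (2 * Real.pi * t) := by
      have h : 2 * Real.pi * θ = 2 * Real.pi * t + (round θ : ℤ) * (2 * Real.pi) := by
        rw [ht]; push_cast; ring
      rw [h, Real.cos_add_int_mul_two_pi]
    rw [hnorm, hcos, sq_abs]
    have hid : Real.cos (2 * Real.pi * t) = 1 - 2 * Real.sin (Real.pi * t) ^ 2 := by
      have h2 : 2 * Real.pi * t = 2 * (Real.pi * t) := by ring
      rw [h2, Real.cos_two_mul]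
      have := Real.sin_sq_add_cos_sq (Real.pi * t)
      nlinarith
    rw [hid]
    -- need t² ≤ sin(πt)²/4 for |t| ≤ 1/2
    have key : 2 * |t| ≤ Real.sin (Real.pi * |t|) := by
      have h0 : (0:ℝ) ≤ |t| := abs_nonneg t
      have h1 : 0 ≤ Real.pi * |t| := by positivity
      have h2 : Real.pi * |t| ≤ Real.pi / 2 := by
        nlinarith [Real.pi_pos]
      have := Real.mul_le_sin h1 h2
      have hpi : Real.pi ≠ 0 := Real.pi_ne_zero
      calc 2 * |t| = 2 / Real.pi * (Real.pi * |t|) := by field_simp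
        _ ≤ Real.sin (Real.pi * |t|) := this
    have hsq : Real.sin (Real.pi * t) ^ 2 = Real.sin (Real.pi * |t|) ^ 2 := by
      rcases abs_cases t with ⟨h, _⟩ | ⟨h, _⟩
      · rw [h]
      · rw [h]
        have : Real.pi * -t = -(Real.pi * t) := by ring
        rw [this, Real.sin_neg]
        ring
    have h4 : 4 * t ^ 2 ≤ Real.sin (Real.pi * |t|) ^ 2 := by
      nlinarith [key, abs_nonneg t, sq_abs t]
    rw [← hsq] at h4
    clear_value t
    linarith
  -- the key closure induction
  have hF : ∀ v : Fin d → ℤ, ∃ C : ℝ, 0 ≤ C ∧ ∀ x : Fin d → ℝ,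
      ‖((∑ i, (v i : ℝ) * x i : ℝ) : AddCircle (1:ℝ))‖ ^ 2 ≤ C * (1 - f x) := by
    intro v
    have hv : v ∈ AddSubgroup.closure (Function.support μ) := by
      rw [hgen]; trivial
    refine AddSubgroup.closure_induction ?_ ?_ ?_ ?_ hv
    · -- generators
      intro w hw
      have hμw : 0 < μ w := lt_of_le_of_ne (hpos w) (Ne.symm hw)
      refine ⟨1 / (8 * μ w), by positivity, fun x => ?_⟩
      have h1 := hsingle x w
      have h2 := hD (∑ i, (w i : ℝ) * x i)
      have h3 : (1 - Real.cos (2 * Real.pi * ∑ i, (w i : ℝ) * x i)) / 8 ≤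
          1 / (8 * μ w) * (1 - f x) := by
        rw [div_le_iff₀ (by norm_num : (0:ℝ) < 8)]
        have h4 : 1 / (8 * μ w) * (1 - f x) * 8 = (1 - f x) / μ w := by
          field_simp
        rw [h4, le_div_iff₀ hμw]
        nlinarith
      linarith
    · -- zero
      refine ⟨0, le_refl 0, fun x => ?_⟩
      have h0 : (∑ i, (((0 : Fin d → ℤ) i : ℝ)) * x i) = 0 := by simp
      rw [h0]
      simp
    · -- add
      rintro a b _ _ ⟨C₁, hC₁, h₁⟩ ⟨C₂, hC₂, h₂⟩
      refine ⟨2 * C₁ + 2 * C₂, by positivity, fun x => ?_⟩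
      have hsum : (∑ i, (((a + b : Fin d → ℤ) i : ℝ)) * x i) =
          (∑ i, (a i : ℝ) * x i) + (∑ i, (b i : ℝ) * x i) := by
        rw [← Finset.sum_add_distrib]
        congr 1; funext i; push_cast [Pi.add_apply]; ring
      rw [hsum]
      have hcoe : ((((∑ i, (a i : ℝ) * x i) + (∑ i, (b i : ℝ) * x i) : ℝ)) :
          AddCircle (1:ℝ)) = ((∑ i, (a i : ℝ) * x i : ℝ) : AddCircle (1:ℝ)) +
          ((∑ i, (b i : ℝ) * x i : ℝ) : AddCircle (1:ℝ)) := rfl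
      rw [hcoe]
      have htri := norm_add_le ((∑ i, (a i : ℝ) * x i : ℝ) : AddCircle (1:ℝ))
        ((∑ i, (b i : ℝ) * x i : ℝ) : AddCircle (1:ℝ))
      have hna := norm_nonneg ((∑ i, (a i : ℝ) * x i : ℝ) : AddCircle (1:ℝ))
      have hnb := norm_nonneg ((∑ i, (b i : ℝ) * x i : ℝ) : AddCircle (1:ℝ))
      have hnab := norm_nonneg (((∑ i, (a i : ℝ) * x i : ℝ) : AddCircle (1:ℝ)) +
        ((∑ i, (b i : ℝ) * x i : ℝ) : AddCircle (1:ℝ)))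
      nlinarith [h₁ x, h₂ x, sq_nonneg (‖((∑ i, (a i : ℝ) * x i : ℝ) : AddCircle (1:ℝ))‖ -
        ‖((∑ i, (b i : ℝ) * x i : ℝ) : AddCircle (1:ℝ))‖)]
    · -- neg
      rintro a _ ⟨C, hC, h⟩
      refine ⟨C, hC, fun x => ?_⟩
      have hsum : (∑ i, (((-a : Fin d → ℤ) i : ℝ)) * x i) =
          -(∑ i, (a i : ℝ) * x i) := by
        rw [← Finset.sum_neg_distrib]
        congr 1; funext i; push_cast [Pi.neg_apply]; ring
      rw [hsum]
      have hcoe : (((-(∑ i, (a i : ℝ) * x i) : ℝ)) : AddCircle (1:ℝ)) =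
          -((∑ i, (a i : ℝ) * x i : ℝ) : AddCircle (1:ℝ)) := rfl
      rw [hcoe, norm_neg]
      exact h x
  choose C hC0 hC using hF
  -- basis vectors
  set e : Fin d → (Fin d → ℤ) := fun i => Pi.single i 1 with he
  have hbasis : ∀ (i : Fin d) (x : Fin d → ℝ), (∑ j, ((e i j : ℝ)) * x j) = x i := by
    intro i x
    rw [Finset.sum_eq_single i]
    · simp [he]
    · intro j _ hj
      simp [he, Pi.single_apply, hj]
    · simp
  set S : ℝ := ∑ i, C (e i) with hS
  have hS0 : 0 ≤ S := Finset.sum_nonneg fun i _ => hC0 (e i)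
  have hdpos : (0:ℝ) < d := by positivity
  refine ⟨min (1 / (S + 1)) (8 * μ 0 / d), lt_min (by positivity) (by positivity), ?_⟩
  intro x
  set c₂ : ℝ := min (1 / (S + 1)) (8 * μ 0 / d) with hc₂
  set T : ℝ := ∑ i, ‖((x i : ℝ) : AddCircle (1 : ℝ))‖ ^ 2 with hT
  have hT0 : 0 ≤ T := Finset.sum_nonneg fun i _ => sq_nonneg _
  have hTled : T ≤ (d : ℝ) / 4 := by
    have : ∀ i : Fin d, ‖((x i : ℝ) : AddCircle (1 : ℝ))‖ ^ 2 ≤ 1 / 4 := by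
      intro i
      have h1 : ‖((x i : ℝ) : AddCircle (1 : ℝ))‖ = |x i - round (x i)| := by
        rw [AddCircle.norm_eq]; norm_num
      have h2 : ‖((x i : ℝ) : AddCircle (1 : ℝ))‖ ≤ 1 / 2 := by
        rw [h1]; exact abs_sub_round (x i)
      nlinarith [norm_nonneg ((x i : ℝ) : AddCircle (1 : ℝ))]
    calc T ≤ ∑ _i : Fin d, (1:ℝ)/4 := Finset.sum_le_sum fun i _ => this i
      _ = (d : ℝ)/4 := by simp; ring
  -- upper bound : T ≤ S (1 - f x)
  have hupper : T ≤ S * (1 - f x) := by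
    have h1 : ∀ i : Fin d, ‖((x i : ℝ) : AddCircle (1 : ℝ))‖ ^ 2 ≤
        C (e i) * (1 - f x) := by
      intro i
      have := hC (e i) x
      rwa [hbasis i x] at this
    calc T ≤ ∑ i, C (e i) * (1 - f x) := Finset.sum_le_sum fun i _ => h1 i
      _ = S * (1 - f x) := by rw [hS, Finset.sum_mul]
  -- lower bound : 2 μ 0 ≤ 1 + f x
  have hlower : 2 * μ 0 ≤ 1 + f x := by
    have hAdd : HasSum
        (fun n : Fin d → ℤ => μ n * (1 + Real.cos (2 * Real.pi * ∑ i, (n i : ℝ) * x i)))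
        (1 + f x) := by
      have h3 := hprob.add (hsummable x).hasSum
      simpa [mul_add, mul_one] using h3
    have h0 : μ 0 * (1 + Real.cos (2 * Real.pi * ∑ i, (((0 : Fin d → ℤ) i : ℝ)) * x i))
        ≤ 1 + f x := by
      refine le_hasSum hAdd 0 fun n _ => ?_
      have := Real.neg_one_le_cos (2 * Real.pi * ∑ i, (n i : ℝ) * x i)
      nlinarith [hpos n]
    have hz : (∑ i, (((0 : Fin d → ℤ) i : ℝ)) * x i) = 0 := by simp
    rw [hz] at h0
    simp only [mul_zero, Real.cos_zero] at h0
    linarith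
  have hgoal : (∑' n, μ n * Real.cos (2 * Real.pi * ∑ i, (n i : ℝ) * x i)) = f x := rfl
  clear_value f T S
  -- combine
  have hc₂le1 : c₂ ≤ 1 / (S + 1) := min_le_left _ _
  have hc₂le2 : c₂ ≤ 8 * μ 0 / d := min_le_right _ _
  have hc₂0 : 0 ≤ c₂ := le_of_lt (lt_min (by positivity) (by positivity))
  have hub : c₂ * T ≤ 1 - f x := by
    have h1 : c₂ * T ≤ (1 / (S + 1)) * T := mul_le_mul_of_nonneg_right hc₂le1 hT0
    have h2 : T ≤ (S + 1) * (1 - f x) := by nlinarith [hfle x]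
    have h3 : (1 / (S + 1)) * T ≤ 1 - f x := by
      rw [div_mul_eq_mul_div, one_mul, div_le_iff₀ (by positivity : (0:ℝ) < S + 1)]
      linarith
    linarith
  have hlb : c₂ * T ≤ 1 + f x := by
    have h1 : c₂ * T ≤ (8 * μ 0 / d) * ((d:ℝ)/4) :=
      mul_le_mul hc₂le2 hTled hT0 (by positivity)
    have h2 : (8 * μ 0 / d) * ((d:ℝ)/4) = 2 * μ 0 := by
      field_simp; ring
    linarith
  rw [hgoal, abs_le]
  constructor <;> linarith
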